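/- Let G be a finite group with trivial center and let u, v ∈ G. If ∼_v refines ∼_u, then ≈_v refines ≈_u, i.e., for all g, h ∈ G, g ≈_v h implies g ≈_u h. -/

import Mathlib

/-- A subrack of a group `G` is a subset closed under conjugation from within. -/
def IsSubrack {G : Type*} [Group G] (S : Set G) : Prop :=
  ∀ a ∈ S, ∀ b ∈ S, a * b * a⁻¹ ∈ S

/-- The subrack of `G` generated by a subset `T`: the smallest subrack containing `T`. -/
def subrackClosure {G : Type*} [Group G] (T : Set G) : Set G :=
  ⋂₀ {S : Set G | IsSubrack S ∧ T ⊆ S}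

/-- The conjugacy class of `a` in `G`. -/
def conjClass {G : Type*} [Group G] (a : G) : Set G :=
  {x : G | ∃ g : G, g * a * g⁻¹ = x}

/-- `B_G(a, g) = ⟨{a, g}⟩_rk ∩ K_G(g)`. -/
def subrackB {G : Type*} [Group G] (a g : G) : Set G :=
  subrackClosure {a, g} ∩ conjClass g

/-- The relation `∼ₐ` whose equivalence classes form the hypothetical pseudo cycle
form of `a`: `g ∼ₐ h` iff `g` and `h` lie in exactly the same sets `B_G(a, y)`. -/
def pseudoRel {G : Type*} [Group G] (a : G) (g h : G) : Prop :=
  ∀ y : G, g ∈ subrackB a y ↔ h ∈ subrackB a y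

/-- The abelian set associated with `a`: elements `x` such that `∼ₓ` refines `∼ₐ`. -/
def assocAbelianSet {G : Type*} [Group G] (a : G) : Set G :=
  {x : G | ∀ g h : G, pseudoRel x g h → pseudoRel a g h}

/-- The relation `≈ₐ` whose equivalence classes form the hypothetical cycle form of `a`. -/
def cycleRel {G : Type*} [Group G] (a : G) (g h : G) : Prop :=
  pseudoRel a g h ∧
    ∀ x : G, x * a = a * x → (x * g * x⁻¹ = g ↔ x * h * x⁻¹ = h)

lemma subset_subrackClosure {G : Type*} [Group G] (T : Set G) : T ⊆ subrackClosure T := by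
  intro x hx
  rw [subrackClosure, Set.mem_sInter]
  exact fun S hS => hS.2 hx

lemma isSubrack_subrackClosure {G : Type*} [Group G] (T : Set G) :
    IsSubrack (subrackClosure T) := by
  intro a ha b hb
  rw [subrackClosure, Set.mem_sInter] at *
  exact fun S hS => hS.1 a (ha S hS) b (hb S hS)

lemma subrackClosure_subset {G : Type*} [Group G] {T S : Set G}
    (hS : IsSubrack S) (hTS : T ⊆ S) : subrackClosure T ⊆ S :=
  Set.sInter_subset_of_mem ⟨hS, hTS⟩

/-- In a finite group, a subrack is closed under conjugation by inverses of its members. -/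
lemma inv_conj_mem_of_isSubrack {G : Type*} [Group G] [Finite G] {S : Set G}
    (hS : IsSubrack S) {v s : G} (hv : v ∈ S) (hs : s ∈ S) : v⁻¹ * s * v ∈ S := by
  have key : ∀ k : ℕ, v ^ k * s * (v ^ k)⁻¹ ∈ S := by
    intro k
    induction k with
    | zero => simpa using hs
    | succ n ih =>
        have := hS v hv _ ih
        have e : v * (v ^ n * s * (v ^ n)⁻¹) * v⁻¹ = v ^ (n + 1) * s * (v ^ (n + 1))⁻¹ := by
          rw [pow_succ']
          group
        rwa [e] at this
  have hn : 0 < orderOf v := orderOf_pos v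
  have hvpow : v ^ (orderOf v - 1) = v⁻¹ := by
    have h1 : v ^ (orderOf v - 1) * v = 1 := by
      rw [← pow_succ, Nat.sub_add_cancel hn, pow_orderOf_eq_one]
    exact eq_inv_of_mul_eq_one_left h1
  have := key (orderOf v - 1)
  rwa [hvpow, inv_inv] at this

lemma conj_mem_conjClass {G : Type*} [Group G] {y z : G} (hz : z ∈ conjClass y) (w : G) :
    w * z * w⁻¹ ∈ conjClass y := by
  obtain ⟨g, hg⟩ := hz
  exact ⟨w * g, by rw [← hg]; group⟩

/-- Every element is `∼ᵥ`-related to its conjugate by `v`. -/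
lemma pseudoRel_conj {G : Type*} [Group G] [Finite G] (v x : G) :
    pseudoRel v x (v * x * v⁻¹) := by
  intro y
  have hv : v ∈ subrackClosure {v, y} :=
    subset_subrackClosure _ (Set.mem_insert v {y})
  constructor
  · rintro ⟨h1, h2⟩
    exact ⟨isSubrack_subrackClosure _ v hv x h1, conj_mem_conjClass h2 v⟩
  · rintro ⟨h1, h2⟩
    constructor
    · have := inv_conj_mem_of_isSubrack (isSubrack_subrackClosure _) hv h1
      have e : v⁻¹ * (v * x * v⁻¹) * v = x := by group
      rwa [e] at this
    · have := conj_mem_conjClass h2 v⁻¹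
      have e : v⁻¹ * (v * x * v⁻¹) * v⁻¹⁻¹ = x := by group
      rwa [e] at this

/-- Elements of the centralizer of `u` form singleton `∼ᵤ`-classes. -/
lemma eq_of_pseudoRel_of_comm {G : Type*} [Group G] {u x w : G}
    (hc : x * u = u * x) (hp : pseudoRel u x w) : w = x := by
  have hsub : IsSubrack ({u, x} : Set G) := by
    intro a ha b hb
    rcases ha with rfl | ha
    · rcases hb with rfl | hb
      · exact Or.inl (by group)
      · rcases hb with rfl
        right
        show a * b * a⁻¹ ∈ ({b} : Set G)
        have : a * b * a⁻¹ = b := by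
          rw [mul_inv_eq_iff_eq_mul, hc.symm]
        simp [this]
    · rcases ha with rfl
      rcases hb with rfl | hb
      · left
        rw [mul_inv_eq_iff_eq_mul, hc]
      · rcases hb with rfl
        exact Or.inr (mul_inv_cancel_right _ _)
  have hxB : x ∈ subrackB u x :=
    ⟨subset_subrackClosure _ (Set.mem_insert_of_mem u rfl), ⟨1, by group⟩⟩
  have hwB : w ∈ subrackB u x := (hp x).mp hxB
  have hw : w ∈ ({u, x} : Set G) :=
    subrackClosure_subset hsub (by rfl) hwB.1
  rcases hw with rfl | hw
  · -- w = u ; show x = u as well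
    have huu : w ∈ subrackB w w := by
      refine ⟨subset_subrackClosure _ (Set.mem_insert w {w}), ⟨1, by group⟩⟩
    have hxu : x ∈ subrackB w w := (hp w).mpr huu
    have hsing : IsSubrack ({w} : Set G) := by
      intro a ha b hb
      simp only [Set.mem_singleton_iff] at ha hb ⊢
      subst ha; subst hb; group
    have : x ∈ ({w} : Set G) :=
      subrackClosure_subset hsing (by simp) hxu.1
    simpa using this.symm
  · exact hw

theorem cycleRel_refines_of_pseudoRel_refines
    {G : Type*} [Group G] [Finite G] (hZ : Subgroup.center G = ⊥) (u v : G)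
    (h : ∀ g h : G, pseudoRel v g h → pseudoRel u g h) :
    ∀ g h : G, cycleRel v g h → cycleRel u g h := by
  intro g₀ h₀ ⟨pv, cv⟩
  refine ⟨h _ _ pv, ?_⟩
  intro x hxu
  have hxv : x * v = v * x := by
    have p1 : pseudoRel u x (v * x * v⁻¹) := h _ _ (pseudoRel_conj v x)
    have := eq_of_pseudoRel_of_comm hxu p1
    rw [mul_inv_eq_iff_eq_mul] at this
    exact this.symm
  exact cv x hxv
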